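/- Let (Ω, ℱ, P) be a probability space, let Y₀, Y₁ : Ω → ℝ be integrable random variables (the potential outcomes), let K be a finite nonempty type, let S : Ω → K be measurable (the site indicator), let Z : Ω → ℝ be measurable taking only the values 0 and 1 (the treatment indicator), and define the observed outcome Y = Z·Y₁ + (1 − Z)·Y₀. Let B ∈ ℱ be an event (representing {X = x}) and fix k ∈ K, with P(B ∩ {S = k} ∩ {Z = 1}) > 0 and P(B ∩ {S = k} ∩ {Z = 0}) > 0. Suppose: (i) under P(·|B ∩ {S = k}), the pair (Y₀, Y₁) is independent of Z (unconfoundedness within site k), and (ii) under P(·|B), the pair (Y₀, Y₁) is independent of S (transportability). Then E_{P(·|B ∩ {S=k} ∩ {Z=1})}[Y] − E_{P(·|B ∩ {S=k} ∩ {Z=0})}[Y] = E_{P(·|B)}[Y₁ − Y₀]. -/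

import Mathlib

open MeasureTheory ProbabilityTheory

lemma integrable_cond_of_integrable {Ω : Type*} [MeasurableSpace Ω] {μ : Measure Ω}
    {f : Ω → ℝ} (hf : Integrable f μ) {s : Set Ω} (hs0 : μ s ≠ 0) :
    Integrable f (μ[|s]) := by
  rw [ProbabilityTheory.cond]
  exact (hf.restrict).smul_measure (ENNReal.inv_ne_top.mpr hs0)

lemma integral_cond_of_indep_indicator {Ω : Type*} [MeasurableSpace Ω]
    (μ : Measure Ω) [IsProbabilityMeasure μ] {f : Ω → ℝ} (hf : Integrable f μ)
    {C : Set Ω} (hCm : MeasurableSet C) (hC0 : μ C ≠ 0)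
    (h : IndepFun f (C.indicator (fun _ => (1:ℝ))) μ) :
    ∫ ω, f ω ∂(μ[|C]) = ∫ ω, f ω ∂μ := by
  have hCtop : μ C ≠ ⊤ := measure_ne_top μ C
  have htR : (μ C).toReal ≠ 0 := ENNReal.toReal_ne_zero.mpr ⟨hC0, hCtop⟩
  have hmul := h.integral_fun_mul_eq_mul_integral hf.aestronglyMeasurable ((integrable_const (1:ℝ)).indicator hCm).aestronglyMeasurable
  have h1 : (fun ω => f ω * C.indicator (fun _ => (1:ℝ)) ω) = C.indicator f := by
    funext ω; by_cases hω : ω ∈ C <;> simp [hω]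
  have h2 : ∫ ω, C.indicator (fun _ => (1:ℝ)) ω ∂μ = (μ C).toReal := by
    rw [integral_indicator_const (1:ℝ) hCm]; simp [Measure.real]
  have h3 : ∫ ω in C, f ω ∂μ = (∫ ω, f ω ∂μ) * (μ C).toReal := by
    rw [← integral_indicator hCm, ← h1]
    calc ∫ ω, f ω * C.indicator (fun _ => (1:ℝ)) ω ∂μ
        = (∫ ω, f ω ∂μ) * ∫ ω, C.indicator (fun _ => (1:ℝ)) ω ∂μ := hmul
      _ = (∫ ω, f ω ∂μ) * (μ C).toReal := by rw [h2]
  rw [ProbabilityTheory.cond, integral_smul_measure, h3, ENNReal.toReal_inv, smul_eq_mul,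
    mul_comm (∫ ω, f ω ∂μ), ← mul_assoc, inv_mul_cancel₀ htR, one_mul]

/-- Identification of the global CATE at `x` from within-site observed data:
under within-site unconfoundedness `(Y₀,Y₁) ⊥ Z` given `B ∩ {S = k}` and
transportability `(Y₀,Y₁) ⊥ S` given `B` (with `B = {X = x}`), the observed
treated-vs-control contrast within site `k` equals `E[Y₁ − Y₀ | B]`. -/
theorem global_cate_identification_within_site
    {Ω : Type*} [MeasurableSpace Ω] (P : Measure Ω) [IsProbabilityMeasure P]
    (Y₀ Y₁ : Ω → ℝ) (hY₀ : Integrable Y₀ P) (hY₁ : Integrable Y₁ P)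
    {K : Type*} [Fintype K] [Nonempty K] [MeasurableSpace K] [MeasurableSingletonClass K]
    (S : Ω → K) (hS : Measurable S)
    (Z : Ω → ℝ) (hZ : Measurable Z) (hZ01 : ∀ ω, Z ω = 0 ∨ Z ω = 1)
    (Y : Ω → ℝ) (hY : ∀ ω, Y ω = Z ω * Y₁ ω + (1 - Z ω) * Y₀ ω)
    (B : Set Ω) (hB : MeasurableSet B) (k : K)
    (hk1 : 0 < P (B ∩ {ω | S ω = k} ∩ {ω | Z ω = 1}))
    (hk0 : 0 < P (B ∩ {ω | S ω = k} ∩ {ω | Z ω = 0}))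
    (hunconf : IndepFun (fun ω => (Y₀ ω, Y₁ ω)) Z (P[|B ∩ {ω | S ω = k}]))
    (htransport : IndepFun (fun ω => (Y₀ ω, Y₁ ω)) S (P[|B])) :
    (∫ ω, Y ω ∂(P[|B ∩ {ω | S ω = k} ∩ {ω | Z ω = 1}])) -
      (∫ ω, Y ω ∂(P[|B ∩ {ω | S ω = k} ∩ {ω | Z ω = 0}])) =
      ∫ ω, (Y₁ ω - Y₀ ω) ∂(P[|B]) := by
  set A := B ∩ {ω | S ω = k} with hAdef
  have hSk : MeasurableSet {ω | S ω = k} := hS (measurableSet_singleton k)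
  have hAm : MeasurableSet A := hB.inter hSk
  have hZ1 : MeasurableSet {ω | Z ω = 1} := hZ (measurableSet_singleton 1)
  have hZ0 : MeasurableSet {ω | Z ω = 0} := hZ (measurableSet_singleton 0)
  have hA0 : P A ≠ 0 :=
    (lt_of_lt_of_le hk1 (measure_mono Set.inter_subset_left)).ne'
  have hB0 : P B ≠ 0 :=
    (lt_of_lt_of_le hk1 (measure_mono (Set.inter_subset_left.trans Set.inter_subset_left))).ne'
  set μ := P[|A] with hμdef
  haveI : IsProbabilityMeasure μ := cond_isProbabilityMeasure hA0
  haveI : IsProbabilityMeasure (P[|B]) := cond_isProbabilityMeasure hB0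
  -- conditional measures expressed as iterated conditioning
  have hcc1 : P[|A ∩ {ω | Z ω = 1}] = μ[|{ω | Z ω = 1}] :=
    (cond_cond_eq_cond_inter hAm hZ1 P).symm
  have hcc0 : P[|A ∩ {ω | Z ω = 0}] = μ[|{ω | Z ω = 0}] :=
    (cond_cond_eq_cond_inter hAm hZ0 P).symm
  have hccS : μ = (P[|B])[|{ω | S ω = k}] :=
    (cond_cond_eq_cond_inter hB hSk P).symm
  -- positivity under conditional measures
  have hμZ1 : μ {ω | Z ω = 1} ≠ 0 := by
    rw [hμdef, cond_apply hAm]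
    exact mul_ne_zero (ENNReal.inv_ne_zero.mpr (measure_ne_top P A)) hk1.ne'
  have hμZ0 : μ {ω | Z ω = 0} ≠ 0 := by
    rw [hμdef, cond_apply hAm]
    exact mul_ne_zero (ENNReal.inv_ne_zero.mpr (measure_ne_top P A)) hk0.ne'
  have hνS : (P[|B]) {ω | S ω = k} ≠ 0 := by
    rw [cond_apply hB]
    exact mul_ne_zero (ENNReal.inv_ne_zero.mpr (measure_ne_top P B))
      (lt_of_lt_of_le hk1 (measure_mono Set.inter_subset_left)).ne'
  -- integrability
  have hY₀μ : Integrable Y₀ μ := integrable_cond_of_integrable hY₀ hA0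
  have hY₁μ : Integrable Y₁ μ := integrable_cond_of_integrable hY₁ hA0
  have hY₀ν : Integrable Y₀ (P[|B]) := integrable_cond_of_integrable hY₀ hB0
  have hY₁ν : Integrable Y₁ (P[|B]) := integrable_cond_of_integrable hY₁ hB0
  -- Y agrees with Y₁ a.e. on the treated conditional measure
  have hae1 : Y =ᵐ[P[|A ∩ {ω | Z ω = 1}]] Y₁ := by
    refine (ae_iff).mpr (measure_mono_null (t := {ω | Z ω = 1}ᶜ) (fun ω hω => ?_) ?_)
    · show ω ∈ {ω | Z ω = 1}ᶜ
      intro h1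
      exact hω (by rw [hY ω, h1]; ring)
    · rw [cond_apply (hAm.inter hZ1)]
      have : (A ∩ {ω | Z ω = 1}) ∩ {ω | Z ω = 1}ᶜ = ∅ := by
        ext ω; simp only [Set.mem_inter_iff, Set.mem_empty_iff_false, iff_false]
        rintro ⟨⟨_, h⟩, h'⟩; exact h' h
      rw [this, measure_empty, mul_zero]
  have hae0 : Y =ᵐ[P[|A ∩ {ω | Z ω = 0}]] Y₀ := by
    refine (ae_iff).mpr (measure_mono_null (t := {ω | Z ω = 0}ᶜ) (fun ω hω => ?_) ?_)
    · show ω ∈ {ω | Z ω = 0}ᶜ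
      intro h0
      exact hω (by rw [hY ω, h0]; ring)
    · rw [cond_apply (hAm.inter hZ0)]
      have : (A ∩ {ω | Z ω = 0}) ∩ {ω | Z ω = 0}ᶜ = ∅ := by
        ext ω; simp only [Set.mem_inter_iff, Set.mem_empty_iff_false, iff_false]
        rintro ⟨⟨_, h⟩, h'⟩; exact h' h
      rw [this, measure_empty, mul_zero]
  -- independence with indicators
  have hiZ1 : IndepFun Y₁ (({ω | Z ω = 1} : Set Ω).indicator (fun _ => (1:ℝ))) μ := by
    have := hunconf.comp measurable_snd
      ((measurable_const.indicator (measurableSet_singleton (1:ℝ))) :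
        Measurable (({1} : Set ℝ).indicator (fun _ => (1:ℝ))))
    have heq : (({1} : Set ℝ).indicator (fun _ => (1:ℝ))) ∘ Z
        = ({ω | Z ω = 1} : Set Ω).indicator (fun _ => (1:ℝ)) := by
      funext ω; by_cases h : Z ω = 1 <;> simp [Function.comp, h]
    rwa [heq] at this
  have hiZ0 : IndepFun Y₀ (({ω | Z ω = 0} : Set Ω).indicator (fun _ => (1:ℝ))) μ := by
    have := hunconf.comp measurable_fst
      ((measurable_const.indicator (measurableSet_singleton (0:ℝ))) :
        Measurable (({0} : Set ℝ).indicator (fun _ => (1:ℝ))))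
    have heq : (({0} : Set ℝ).indicator (fun _ => (1:ℝ))) ∘ Z
        = ({ω | Z ω = 0} : Set Ω).indicator (fun _ => (1:ℝ)) := by
      funext ω; by_cases h : Z ω = 0 <;> simp [Function.comp, h]
    rwa [heq] at this
  have hiS : IndepFun (fun ω => Y₁ ω - Y₀ ω)
      (({ω | S ω = k} : Set Ω).indicator (fun _ => (1:ℝ))) (P[|B]) := by
    have := htransport.comp (measurable_snd.sub measurable_fst)
      ((measurable_const.indicator (measurableSet_singleton k)) :
        Measurable (({k} : Set K).indicator (fun _ => (1:ℝ))))
    have heq : (({k} : Set K).indicator (fun _ => (1:ℝ))) ∘ S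
        = ({ω | S ω = k} : Set Ω).indicator (fun _ => (1:ℝ)) := by
      funext ω; by_cases h : S ω = k <;> simp [Function.comp, h]
    rwa [heq] at this
  -- assemble
  have e1 : ∫ ω, Y ω ∂(P[|A ∩ {ω | Z ω = 1}]) = ∫ ω, Y₁ ω ∂μ := by
    rw [integral_congr_ae hae1, hcc1]
    exact integral_cond_of_indep_indicator μ hY₁μ hZ1 hμZ1 hiZ1
  have e0 : ∫ ω, Y ω ∂(P[|A ∩ {ω | Z ω = 0}]) = ∫ ω, Y₀ ω ∂μ := by
    rw [integral_congr_ae hae0, hcc0]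
    exact integral_cond_of_indep_indicator μ hY₀μ hZ0 hμZ0 hiZ0
  rw [e1, e0, ← integral_sub hY₁μ hY₀μ]
  have : ∫ ω, (Y₁ ω - Y₀ ω) ∂μ = ∫ ω, (Y₁ ω - Y₀ ω) ∂((P[|B])[|{ω | S ω = k}]) := by
    rw [← hccS]
  rw [this]
  exact integral_cond_of_indep_indicator (P[|B]) (hY₁ν.sub hY₀ν) hSk hνS hiS
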